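/- Let G be a free module of rank g over a commutative ring. For every integer i ≥ 1, the complex ⋯ → D_2 G* ⊗ ⋀^{i-2} G* → D_1 G* ⊗ ⋀^{i-1} G* → D_0 G* ⊗ ⋀^i G* → 0 (with differentials induced by comultiplication on divided powers followed by exterior multiplication) is split exact; in particular, the exterior multiplication map μ : G* ⊗ ⋀^{i-1} G* → ⋀^i G* is a split surjection whose kernel equals the image of D_2 G* ⊗ ⋀^{i-2} G* → G* ⊗ ⋀^{i-1} G*. -/

import Mathlib

/- The split exact complex `⋯ → D_2 G* ⊗ ⋀^{i-2} G* → D_1 G* ⊗ ⋀^{i-1} G* → D_0 G* ⊗ ⋀^i G* → 0`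
for a free module `G` of rank `g`, in coordinates: `G*` has basis `Fin g`, `D_c G*` has basis
the exponent vectors `k : Fin g → ℕ` of degree `c`, and `⋀^d G*` has basis the subsets
`s : Finset (Fin g)` of cardinality `d`.  The module `DW R g i c` is `D_c G* ⊗ ⋀^{i-c} G*`
(it is zero when `c > i`), and the differential `γ^(c) ⊗ z ↦ γ^(c-1) ⊗ (γ ∧ z)` becomes the
combinatorial map `dDW` below.  The claim: for `i ≥ 1` the complex is split exact, witnessed by
a contracting homotopy; in particular the exterior multiplication map
`μ = dDW R g i 0 : D_1 G* ⊗ ⋀^{i-1} G* → ⋀^i G*` is a split surjection whose kernel is the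
image of `D_2 G* ⊗ ⋀^{i-2} G* → D_1 G* ⊗ ⋀^{i-1} G*`. -/

noncomputable section

/-- Coordinate model of `D_c G* ⊗ ⋀^{i-c} G*`. -/
abbrev DW (R : Type*) [CommRing R] (g i c : ℕ) : Type _ :=
  {p : (Fin g → ℕ) × Finset (Fin g) // (∑ j, p.1 j) = c ∧ p.2.card + c = i} → R

/-- The differential `D_{c+1} G* ⊗ ⋀^{i-c-1} G* → D_c G* ⊗ ⋀^{i-c} G*`, sending
`γ^(c+1) ⊗ z` to `γ^(c) ⊗ (γ ∧ z)` (extended via comultiplication on divided powers). -/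
def dDW (R : Type*) [CommRing R] (g i c : ℕ) : DW R g i (c + 1) →ₗ[R] DW R g i c where
  toFun F := fun p => ∑ j ∈ p.1.2.attach,
    ((-1 : R) ^ ((p.1.2.filter (fun t => t < j.1)).card)) *
      F ⟨(p.1.1 + Pi.single j.1 1, p.1.2.erase j.1), by
        obtain ⟨h1, h2⟩ := p.2
        refine ⟨?_, ?_⟩
        · simp [Finset.sum_add_distrib, h1, Finset.sum_pi_single']
        · have hc : 1 ≤ p.1.2.card := Finset.card_pos.mpr ⟨j.1, j.2⟩
          rw [Finset.card_erase_of_mem j.2]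
          omega⟩
  map_add' F G := by
    funext p
    simp [mul_add, Finset.sum_add_distrib]
  map_smul' r F := by
    funext p
    simp only [Pi.smul_apply, smul_eq_mul, RingHom.id_apply]
    rw [Finset.mul_sum]
    exact Finset.sum_congr rfl fun j _ => by ring

namespace Stmt7Aux

/-- union of the support of the exponent vector and the exterior subset -/
def suppU {g : ℕ} (p : (Fin g → ℕ) × Finset (Fin g)) : Finset (Fin g) :=
  (Finset.univ.filter fun j => p.1 j ≠ 0) ∪ p.2

lemma mem_suppU {g : ℕ} {p : (Fin g → ℕ) × Finset (Fin g)} {t : Fin g} :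
    t ∈ suppU p ↔ p.1 t ≠ 0 ∨ t ∈ p.2 := by
  simp [suppU]

lemma suppU_nonempty {g : ℕ} {p : (Fin g → ℕ) × Finset (Fin g)}
    (h : (∑ j, p.1 j) + p.2.card ≠ 0) : (suppU p).Nonempty := by
  rcases Finset.eq_empty_or_nonempty p.2 with hs | hs
  · have hk : ∃ j, p.1 j ≠ 0 := by
      by_contra h'
      push_neg at h'
      apply h
      rw [hs]
      simp [h']
    obtain ⟨j, hj⟩ := hk
    exact ⟨j, mem_suppU.2 (Or.inl hj)⟩
  · obtain ⟨t, ht⟩ := hs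
    exact ⟨t, mem_suppU.2 (Or.inr ht)⟩

/-- total extension of an element of `DW R g i c` to all pairs `(k, s)` -/
def extF {R : Type*} [CommRing R] {g i c : ℕ} (F : DW R g i c)
    (k : Fin g → ℕ) (s : Finset (Fin g)) : R :=
  if h : (∑ j, k j) = c ∧ s.card + c = i then F ⟨(k, s), h⟩ else 0

lemma extF_pos {R : Type*} [CommRing R] {g i c : ℕ} (F : DW R g i c)
    {k : Fin g → ℕ} {s : Finset (Fin g)} (h : (∑ j, k j) = c ∧ s.card + c = i) :
    extF F k s = F ⟨(k, s), h⟩ := dif_pos h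

lemma extF_add {R : Type*} [CommRing R] {g i c : ℕ} (F G : DW R g i c)
    (k : Fin g → ℕ) (s : Finset (Fin g)) :
    extF (F + G) k s = extF F k s + extF G k s := by
  unfold extF; split_ifs <;> simp

lemma extF_smul {R : Type*} [CommRing R] {g i c : ℕ} (r : R) (F : DW R g i c)
    (k : Fin g → ℕ) (s : Finset (Fin g)) :
    extF (r • F) k s = r * extF F k s := by
  unfold extF; split_ifs <;> simp

lemma dDW_apply {R : Type*} [CommRing R] {g i c : ℕ} (F : DW R g i (c + 1))
    (p : {p : (Fin g → ℕ) × Finset (Fin g) // (∑ j, p.1 j) = c ∧ p.2.card + c = i}) :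
    dDW R g i c F p = ∑ j ∈ p.1.2, (-1 : R) ^ ((p.1.2.filter (fun t => t < j)).card) *
      extF F (p.1.1 + Pi.single j 1) (p.1.2.erase j) := by
  show ∑ j ∈ p.1.2.attach, _ = _
  refine Eq.trans (Finset.sum_congr rfl fun j _ => ?_)
    (Finset.sum_attach p.1.2 (fun j => (-1 : R) ^ ((p.1.2.filter (fun t => t < j)).card) *
      extF F (p.1.1 + Pi.single j 1) (p.1.2.erase j)))
  congr 1
  rw [extF_pos F ⟨by simp [Finset.sum_add_distrib, p.2.1, Finset.sum_pi_single'], by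
    have hc : 1 ≤ p.1.2.card := Finset.card_pos.mpr ⟨j.1, j.2⟩
    rw [Finset.card_erase_of_mem j.2]
    have := p.2.2
    omega⟩]

lemma min'_eq {g : ℕ} {A B : Finset (Fin g)} (h : A = B) (hA : A.Nonempty) (hB : B.Nonempty) :
    A.min' hA = B.min' hB := by subst h; rfl

lemma suppU_step {g : ℕ} {k : Fin g → ℕ} {s : Finset (Fin g)} {j : Fin g} (hj : j ∈ s) :
    suppU (k + Pi.single j 1, s.erase j) = suppU (k, s) := by
  ext t
  simp only [mem_suppU, Finset.mem_erase, Pi.add_apply, Pi.single_apply]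
  by_cases h : t = j
  · subst h; simp [hj]
  · simp [h]

lemma min_step {g : ℕ} {k : Fin g → ℕ} {s : Finset (Fin g)} {j : Fin g} (hj : j ∈ s)
    (h2 : (suppU (k, s)).Nonempty) {h1 : (suppU (k + Pi.single j 1, s.erase j)).Nonempty} :
    (suppU (k + Pi.single j 1, s.erase j)).min' h1 = (suppU (k, s)).min' h2 :=
  min'_eq (suppU_step hj) _ _

/-- the contracting homotopy -/
def hDW (R : Type*) [CommRing R] (g i c : ℕ) : DW R g i c →ₗ[R] DW R g i (c + 1) where
  toFun F := fun p =>
    if (suppU p.1).min' (suppU_nonempty (by have := p.2.1; omega)) ∈ p.1.2 then 0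
    else extF F (p.1.1 - Pi.single ((suppU p.1).min' (suppU_nonempty (by have := p.2.1; omega))) 1)
      (insert ((suppU p.1).min' (suppU_nonempty (by have := p.2.1; omega))) p.1.2)
  map_add' F G := by
    funext p
    rw [Pi.add_apply]
    split_ifs
    · simp
    · rw [extF_add]
  map_smul' r F := by
    funext p
    rw [Pi.smul_apply, smul_eq_mul]
    split_ifs
    · simp
    · rw [extF_smul, RingHom.id_apply]

lemma pi1 {g : ℕ} (k : Fin g → ℕ) (m : Fin g) :
    k + Pi.single m 1 - Pi.single m 1 = k := by
  funext t
  simp only [Pi.sub_apply, Pi.add_apply, Pi.single_apply]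
  by_cases h : t = m <;> simp [h]

lemma pi2 {g : ℕ} (k : Fin g → ℕ) (m : Fin g) (hkm : k m ≠ 0) :
    k - Pi.single m 1 + Pi.single m 1 = k := by
  funext t
  simp only [Pi.sub_apply, Pi.add_apply, Pi.single_apply]
  by_cases h : t = m
  · subst h; rw [if_pos rfl]; omega
  · simp [h]

lemma pi3 {g : ℕ} (k : Fin g → ℕ) (m j : Fin g) (hkm : k m ≠ 0) (hjm : j ≠ m) :
    k - Pi.single m 1 + Pi.single j 1 = k + Pi.single j 1 - Pi.single m 1 := by
  funext t
  simp only [Pi.sub_apply, Pi.add_apply, Pi.single_apply]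
  by_cases h1 : t = m
  · subst h1
    rw [if_pos rfl, if_neg (fun h => hjm h.symm)]
    omega
  · simp [h1]

lemma sum_sub_single {g : ℕ} {k : Fin g → ℕ} {m : Fin g} (hkm : k m ≠ 0) :
    (∑ j, (k - Pi.single m 1 : Fin g → ℕ) j) + 1 = ∑ j, k j := by
  have h1 : ∑ j, ((k - Pi.single m 1 : Fin g → ℕ) j + (Pi.single m 1 : Fin g → ℕ) j) = ∑ j, k j :=
    Finset.sum_congr rfl fun t _ => by rw [← Pi.add_apply]; exact congrFun (pi2 k m hkm) t
  rw [Finset.sum_add_distrib, Finset.sum_pi_single'] at h1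
  simpa using h1

end Stmt7Aux


namespace Stmt7Aux

lemma dDW_apply' {R : Type*} [CommRing R] {g i c : ℕ} (F : DW R g i (c + 1))
    (k : Fin g → ℕ) (s : Finset (Fin g)) (h1 : (∑ j, k j) = c) (h2 : s.card + c = i) :
    dDW R g i c F ⟨(k, s), ⟨h1, h2⟩⟩ =
      ∑ j ∈ s, (-1 : R) ^ ((s.filter (fun t => t < j)).card) *
        extF F (k + Pi.single j 1) (s.erase j) :=
  dDW_apply F ⟨(k, s), ⟨h1, h2⟩⟩

lemma hDW_apply {R : Type*} [CommRing R] {g i c : ℕ} (F : DW R g i c)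
    (k : Fin g → ℕ) (s : Finset (Fin g)) (h1 : (∑ j, k j) = c + 1)
    (h2 : s.card + (c + 1) = i) (hne : (suppU (k, s)).Nonempty) :
    hDW R g i c F ⟨(k, s), ⟨h1, h2⟩⟩ =
      if (suppU (k, s)).min' hne ∈ s then 0
      else extF F (k - Pi.single ((suppU (k, s)).min' hne) 1)
        (insert ((suppU (k, s)).min' hne) s) := by
  simp only [hDW, LinearMap.coe_mk, AddHom.coe_mk]

end Stmt7Aux
namespace Stmt7Aux

lemma dh_pt {R : Type*} [CommRing R] {g i c : ℕ} (x : DW R g i c)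
    (p : {p : (Fin g → ℕ) × Finset (Fin g) // (∑ j, p.1 j) = c ∧ p.2.card + c = i})
    (hne : (suppU p.1).Nonempty) (hm : (suppU p.1).min' hne ∈ p.1.2) :
    dDW R g i c (hDW R g i c x) p = x p := by
  obtain ⟨⟨k, s⟩, hk, hs⟩ := p
  have hk' : (∑ j, k j) = c := hk
  have hs' : s.card + c = i := hs
  have hne2 : (suppU (k, s)).Nonempty := hne
  have hm2 : (suppU (k, s)).min' hne2 ∈ s := hm
  have hcard : 1 ≤ s.card := Finset.card_pos.mpr ⟨_, hm2⟩
  rw [show (⟨(k, s), ⟨hk, hs⟩⟩ : {p : (Fin g → ℕ) × Finset (Fin g) //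
    (∑ j, p.1 j) = c ∧ p.2.card + c = i}) = ⟨(k, s), ⟨hk', hs'⟩⟩ from rfl]
  rw [dDW_apply' (hDW R g i c x) k s hk' hs']
  have hz : ∀ b ∈ s, b ≠ (suppU (k, s)).min' hne2 →
      (-1 : R) ^ ((s.filter (fun t => t < b)).card) *
        extF (hDW R g i c x) (k + Pi.single b 1) (s.erase b) = 0 := by
    intro b hb hbm
    have hva : (∑ t, (k + Pi.single b 1 : Fin g → ℕ) t) = c + 1 := by
      simp [Finset.sum_add_distrib, hk', Finset.sum_pi_single']
    have hvb : (s.erase b).card + (c + 1) = i := by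
      rw [Finset.card_erase_of_mem hb]; omega
    have hne3 : (suppU (k + Pi.single b 1, s.erase b)).Nonempty :=
      (suppU_step hb).symm ▸ hne2
    rw [extF_pos _ ⟨hva, hvb⟩, hDW_apply x _ _ hva hvb hne3, min_step hb hne2,
      if_pos (Finset.mem_erase.2 ⟨Ne.symm hbm, hm2⟩)]
    exact mul_zero _
  refine (Finset.sum_eq_single_of_mem _ hm2 hz).trans ?_
  have hfil : s.filter (fun t => t < (suppU (k, s)).min' hne2) = ∅ :=
    Finset.filter_false_of_mem
      (fun t ht => not_lt.2 (Finset.min'_le _ t (Finset.mem_union_right _ ht)))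
  have hva : (∑ t, (k + Pi.single ((suppU (k, s)).min' hne2) 1 : Fin g → ℕ) t) = c + 1 := by
    simp [Finset.sum_add_distrib, hk', Finset.sum_pi_single']
  have hvb : (s.erase ((suppU (k, s)).min' hne2)).card + (c + 1) = i := by
    rw [Finset.card_erase_of_mem hm2]; omega
  have hne3 : (suppU (k + Pi.single ((suppU (k, s)).min' hne2) 1,
      s.erase ((suppU (k, s)).min' hne2))).Nonempty := (suppU_step hm2).symm ▸ hne2
  rw [hfil]
  simp only [Finset.card_empty, pow_zero, one_mul]
  rw [extF_pos _ ⟨hva, hvb⟩, hDW_apply x _ _ hva hvb hne3, min_step hm2 hne2,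
    if_neg (Finset.notMem_erase _ _), pi1 k _, Finset.insert_erase hm2]
  exact extF_pos x ⟨hk', hs'⟩

lemma homotopy_step {R : Type*} [CommRing R] {g i : ℕ} (c : ℕ) (x : DW R g i (c + 1)) :
    dDW R g i (c + 1) (hDW R g i (c + 1) x) + hDW R g i c (dDW R g i c x) = x := by
  funext p
  obtain ⟨⟨k, s⟩, hk, hs⟩ := p
  have hk' : (∑ j, k j) = c + 1 := hk
  have hs' : s.card + (c + 1) = i := hs
  have hne : (suppU (k, s)).Nonempty :=
    suppU_nonempty (by show (∑ j, k j) + s.card ≠ 0; omega)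
  rw [Pi.add_apply]
  rw [show (⟨(k, s), ⟨hk, hs⟩⟩ : {p : (Fin g → ℕ) × Finset (Fin g) //
    (∑ j, p.1 j) = c + 1 ∧ p.2.card + (c + 1) = i}) = ⟨(k, s), ⟨hk', hs'⟩⟩ from rfl]
  by_cases hm : (suppU (k, s)).min' hne ∈ s
  · rw [dh_pt x ⟨(k, s), ⟨hk', hs'⟩⟩ hne hm]
    rw [hDW_apply _ _ _ hk' hs' hne, if_pos hm, add_zero]
  · have hkm : k ((suppU (k, s)).min' hne) ≠ 0 := by
      rcases mem_suppU.1 (Finset.min'_mem _ hne) with h | h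
      · exact h
      · exact absurd h hm
    have hmlt : ∀ t ∈ s, (suppU (k, s)).min' hne < t := fun t ht =>
      lt_of_le_of_ne (Finset.min'_le _ t (Finset.mem_union_right _ ht)) (fun h => hm (h ▸ ht))
    have hT1 : dDW R g i (c + 1) (hDW R g i (c + 1) x) ⟨(k, s), ⟨hk', hs'⟩⟩ =
        ∑ j ∈ s, (-1 : R) ^ ((s.filter (fun t => t < j)).card) *
          extF x (k + Pi.single j 1 - Pi.single ((suppU (k, s)).min' hne) 1)
            (insert ((suppU (k, s)).min' hne) (s.erase j)) := by
      rw [dDW_apply' (hDW R g i (c + 1) x) k s hk' hs']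
      refine Finset.sum_congr rfl fun j hj => ?_
      congr 1
      have hva : (∑ t, (k + Pi.single j 1 : Fin g → ℕ) t) = (c + 1) + 1 := by
        simp [Finset.sum_add_distrib, hk', Finset.sum_pi_single']
      have hvb : (s.erase j).card + ((c + 1) + 1) = i := by
        rw [Finset.card_erase_of_mem hj]
        have : 1 ≤ s.card := Finset.card_pos.mpr ⟨_, hj⟩
        omega
      have hne3 : (suppU (k + Pi.single j 1, s.erase j)).Nonempty :=
        (suppU_step hj).symm ▸ hne
      rw [extF_pos _ ⟨hva, hvb⟩, hDW_apply x _ _ hva hvb hne3, min_step hj hne,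
        if_neg (fun h => hm (Finset.mem_of_mem_erase h))]
    have hT2 : hDW R g i c (dDW R g i c x) ⟨(k, s), ⟨hk', hs'⟩⟩ =
        x ⟨(k, s), ⟨hk', hs'⟩⟩ + ∑ j ∈ s, -((-1 : R) ^ ((s.filter (fun t => t < j)).card) *
          extF x (k + Pi.single j 1 - Pi.single ((suppU (k, s)).min' hne) 1)
            (insert ((suppU (k, s)).min' hne) (s.erase j))) := by
      rw [hDW_apply _ _ _ hk' hs' hne, if_neg hm]
      have hv2a : (∑ t, (k - Pi.single ((suppU (k, s)).min' hne) 1 : Fin g → ℕ) t) = c := by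
        have := sum_sub_single hkm
        omega
      have hv2b : (insert ((suppU (k, s)).min' hne) s).card + c = i := by
        rw [Finset.card_insert_of_notMem hm]
        omega
      rw [extF_pos _ ⟨hv2a, hv2b⟩, dDW_apply' x _ _ hv2a hv2b, Finset.sum_insert hm]
      congr 1
      · have hfil : (insert ((suppU (k, s)).min' hne) s).filter
            (fun t => t < (suppU (k, s)).min' hne) = ∅ := by
          refine Finset.filter_false_of_mem ?_
          intro t ht
          rcases Finset.mem_insert.1 ht with rfl | ht'
          · exact lt_irrefl _
          · exact not_lt.2 (hmlt t ht').le
        rw [hfil]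
        simp only [Finset.card_empty, pow_zero, one_mul]
        rw [pi2 k _ hkm, Finset.erase_insert hm]
        exact extF_pos x ⟨hk', hs'⟩
      · refine Finset.sum_congr rfl fun j hj => ?_
        have hmj : (suppU (k, s)).min' hne < j := hmlt j hj
        have hjm : j ≠ (suppU (k, s)).min' hne := ne_of_gt hmj
        rw [pi3 k _ j hkm hjm, Finset.erase_insert_of_ne (Ne.symm hjm)]
        have hfil : (insert ((suppU (k, s)).min' hne) s).filter (fun t => t < j) =
            insert ((suppU (k, s)).min' hne) (s.filter (fun t => t < j)) := by
          rw [Finset.filter_insert, if_pos hmj]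
        rw [hfil, Finset.card_insert_of_notMem (fun h => hm (Finset.mem_filter.1 h).1), pow_succ]
        ring
    rw [hT1, hT2, Finset.sum_neg_distrib]
    ring

lemma homotopy_base {R : Type*} [CommRing R] {g i : ℕ} (hi : 1 ≤ i) (x : DW R g i 0) :
    dDW R g i 0 (hDW R g i 0 x) = x := by
  funext p
  obtain ⟨⟨k, s⟩, hk, hs⟩ := p
  have hk' : (∑ j, k j) = 0 := hk
  have hs' : s.card + 0 = i := hs
  have hne : (suppU (k, s)).Nonempty :=
    suppU_nonempty (by show (∑ j, k j) + s.card ≠ 0; omega)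
  refine dh_pt x ⟨(k, s), ⟨hk, hs⟩⟩ hne ?_
  rcases mem_suppU.1 (Finset.min'_mem _ hne) with h | h
  · exact absurd (Finset.sum_eq_zero_iff.1 hk' _ (Finset.mem_univ _)) h
  · exact h

lemma sign_lemma {R : Type*} [CommRing R] (a b : ℕ) (E : R) (hb : b ≠ 0) :
    (-1 : R) ^ a * ((-1) ^ (b - 1) * E) = -((-1) ^ b * ((-1) ^ a * E)) := by
  obtain ⟨d, rfl⟩ : ∃ d, b = d + 1 := ⟨b - 1, by omega⟩
  simp only [Nat.add_sub_cancel, pow_succ]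
  ring

lemma double_sum_antisymm {R : Type*} [CommRing R] {g : ℕ} (s : Finset (Fin g))
    (f : Fin g → Fin g → R)
    (hf : ∀ j ∈ s, ∀ j' ∈ s, j ≠ j' → f j j' = - f j' j) :
    ∑ j ∈ s, ∑ j' ∈ s.erase j, f j j' = 0 := by
  have h1 : ∀ j, ∑ j' ∈ s.erase j, f j j' = ∑ j' ∈ s, if j' = j then 0 else f j j' := by
    intro j
    rw [← Finset.sum_erase s (f := fun j' => if j' = j then 0 else f j j') (if_pos rfl)]
    exact Finset.sum_congr rfl fun j' hj' => (if_neg (Finset.ne_of_mem_erase hj')).symm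
  simp only [h1]
  rw [← Finset.sum_product']
  refine Finset.sum_involution (fun p _ => (p.2, p.1)) ?_ ?_ (fun p hp => ?_) (fun p hp => rfl)
  · intro p hp
    by_cases h : p.2 = p.1
    · simp [h]
    · obtain ⟨hp1, hp2⟩ := Finset.mem_product.1 hp
      rw [if_neg h, if_neg (fun h' => h h'.symm)]
      rw [hf p.1 hp1 p.2 hp2 (fun h' => h h'.symm)]
      exact neg_add_cancel _
  · intro p hp hF h
    apply hF
    have h2 : p.2 = p.1 := congrArg Prod.fst h
    rw [if_pos h2]
  · obtain ⟨hp1, hp2⟩ := Finset.mem_product.1 hp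
    exact Finset.mem_product.2 ⟨hp2, hp1⟩

lemma dd {R : Type*} [CommRing R] {g i : ℕ} (y : DW R g i (1 + 1)) :
    dDW R g i 0 (dDW R g i 1 y) = 0 := by
  funext p
  obtain ⟨⟨k, s⟩, hk, hs⟩ := p
  have hk' : (∑ j, k j) = 0 := hk
  have hs' : s.card + 0 = i := hs
  rw [Pi.zero_apply]
  rw [show (⟨(k, s), ⟨hk, hs⟩⟩ : {p : (Fin g → ℕ) × Finset (Fin g) //
    (∑ j, p.1 j) = 0 ∧ p.2.card + 0 = i}) = ⟨(k, s), ⟨hk', hs'⟩⟩ from rfl]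
  rw [dDW_apply' (dDW R g i 1 y) k s hk' hs']
  have hstep : ∀ j ∈ s, extF (dDW R g i 1 y) (k + Pi.single j 1) (s.erase j) =
      ∑ j' ∈ s.erase j, (-1 : R) ^ (((s.erase j).filter (fun t => t < j')).card) *
        extF y ((k + Pi.single j 1) + Pi.single j' 1) ((s.erase j).erase j') := by
    intro j hj
    have hva : (∑ t, (k + Pi.single j 1 : Fin g → ℕ) t) = 0 + 1 := by
      simp [Finset.sum_add_distrib, hk', Finset.sum_pi_single']
    have hvb : (s.erase j).card + (0 + 1) = i := by
      rw [Finset.card_erase_of_mem hj]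
      have h1 : 1 ≤ s.card := Finset.card_pos.mpr ⟨_, hj⟩
      omega
    rw [extF_pos _ ⟨hva, hvb⟩]
    exact dDW_apply' y _ _ hva hvb
  calc (∑ j ∈ s, (-1 : R) ^ ((s.filter (fun t => t < j)).card) *
          extF (dDW R g i 1 y) (k + Pi.single j 1) (s.erase j))
      = ∑ j ∈ s, ∑ j' ∈ s.erase j, (-1 : R) ^ ((s.filter (fun t => t < j)).card) *
          ((-1 : R) ^ (((s.erase j).filter (fun t => t < j')).card) *
            extF y ((k + Pi.single j 1) + Pi.single j' 1) ((s.erase j).erase j')) := by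
        refine Finset.sum_congr rfl fun j hj => ?_
        rw [hstep j hj, Finset.mul_sum]
    _ = 0 := by
        refine double_sum_antisymm s _ ?_
        intro j hj j' hj' hnej
        have hE : extF y ((k + Pi.single j 1) + Pi.single j' 1) ((s.erase j).erase j') =
            extF y ((k + Pi.single j' 1) + Pi.single j 1) ((s.erase j').erase j) := by
          rw [add_right_comm, Finset.erase_right_comm]
        rcases lt_or_gt_of_ne hnej with hlt | hlt
        · have h1 : ((s.erase j).filter (fun t => t < j')).card =
              ((s.filter (fun t => t < j')).card) - 1 := by
            rw [Finset.filter_erase, Finset.card_erase_of_mem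
              (show j ∈ s.filter (fun t => t < j') from Finset.mem_filter.2 ⟨hj, hlt⟩)]
          have h2 : ((s.erase j').filter (fun t => t < j)).card =
              (s.filter (fun t => t < j)).card := by
            rw [Finset.filter_erase, Finset.erase_eq_of_notMem
              (show j' ∉ s.filter (fun t => t < j) from
                fun hmem => absurd (Finset.mem_filter.1 hmem).2 (not_lt.2 hlt.le))]
          have hb : (s.filter (fun t => t < j')).card ≠ 0 :=
            Finset.card_ne_zero_of_mem (Finset.mem_filter.2 ⟨hj, hlt⟩)
          rw [h1, h2, hE]
          exact sign_lemma _ _ _ hb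
        · have h1 : ((s.erase j).filter (fun t => t < j')).card =
              (s.filter (fun t => t < j')).card := by
            rw [Finset.filter_erase, Finset.erase_eq_of_notMem
              (show j ∉ s.filter (fun t => t < j') from
                fun hmem => absurd (Finset.mem_filter.1 hmem).2 (not_lt.2 hlt.le))]
          have h2 : ((s.erase j').filter (fun t => t < j)).card =
              (s.filter (fun t => t < j)).card - 1 := by
            rw [Finset.filter_erase, Finset.card_erase_of_mem
              (show j' ∈ s.filter (fun t => t < j) from Finset.mem_filter.2 ⟨hj', hlt⟩)]
          have hb : (s.filter (fun t => t < j)).card ≠ 0 :=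
            Finset.card_ne_zero_of_mem (Finset.mem_filter.2 ⟨hj', hlt⟩)
          rw [h1, h2, hE, sign_lemma _ _ _ hb, neg_neg]

end Stmt7Aux

theorem stmt_7 (R : Type*) [CommRing R] (g i : ℕ) (hi : 1 ≤ i) :
    (∃ s : ∀ c : ℕ, DW R g i c →ₗ[R] DW R g i (c + 1),
      (∀ x : DW R g i 0, dDW R g i 0 (s 0 x) = x) ∧
      (∀ (c : ℕ) (x : DW R g i (c + 1)),
        dDW R g i (c + 1) (s (c + 1) x) + s c (dDW R g i c x) = x)) ∧
    Function.Surjective (dDW R g i 0) ∧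
    LinearMap.ker (dDW R g i 0) = LinearMap.range (dDW R g i 1) := by
  refine ⟨⟨fun c => Stmt7Aux.hDW R g i c, Stmt7Aux.homotopy_base hi,
    fun c x => Stmt7Aux.homotopy_step c x⟩, ?_, ?_⟩
  · intro y
    exact ⟨Stmt7Aux.hDW R g i 0 y, Stmt7Aux.homotopy_base hi y⟩
  · ext x
    simp only [LinearMap.mem_ker, LinearMap.mem_range]
    constructor
    · intro hx
      have h := Stmt7Aux.homotopy_step 0 x
      rw [hx, map_zero, add_zero] at h
      exact ⟨Stmt7Aux.hDW R g i 1 x, h⟩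
    · rintro ⟨y, rfl⟩
      exact Stmt7Aux.dd y

end
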